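/- Let R be a ring containing elements x, y with xy = 1 and yx ≠ 1. Then the matrix A = [[y, 1 − yx], [0, x]] ∈ M_2(R) is invertible in M_2(R) with inverse A⁻¹ = [[x, 0], [1 − yx, y]]; in particular, A belongs to the upper triangular structural matrix ring M_2(θ,R) with θ = {(1,1),(1,2),(2,2)}, while A⁻¹ does not belong to M_2(θ,R). -/
import Mathlib

/-- Let `R` be a ring with elements `x, y` satisfying `xy = 1` and `yx ≠ 1`.  Then the
matrix `A = [[y, 1-yx],[0,x]]` is invertible in `M₂(R)` with inverse
`A⁻¹ = [[x, 0],[1-yx, y]]`; in particular `A` belongs to the upper triangular structural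
matrix ring `M₂(θ,R)` with `θ = {(1,1),(1,2),(2,2)}` (i.e. `θ i j ↔ i ≤ j`), while
`A⁻¹` does not belong to `M₂(θ,R)`. -/
theorem stmt_18 {R : Type*} [Ring R] (x y : R) (hxy : x * y = 1) (hyx : y * x ≠ 1) :
    !![y, 1 - y * x; 0, x] * !![x, 0; 1 - y * x, y] = 1 ∧
    !![x, 0; 1 - y * x, y] * !![y, 1 - y * x; 0, x] = 1 ∧
    (∀ i j : Fin 2, ¬ i ≤ j → !![y, 1 - y * x; 0, x] i j = 0) ∧
    ¬ (∀ i j : Fin 2, ¬ i ≤ j → !![x, 0; 1 - y * x, y] i j = 0) := by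
  have h1 : y * x + (1 - y * x) * (1 - y * x) = 1 := by
    have : (1 - y * x) * (1 - y * x) = 1 - y * x - (y * x - y * (x * y) * x) := by
      noncomm_ring
    rw [this, hxy]; noncomm_ring
  have h2 : (1 - y * x) * y = 0 := by
    have : (1 - y * x) * y = y - y * (x * y) := by noncomm_ring
    rw [this, hxy]; simp
  have h3 : x * (1 - y * x) = 0 := by
    have : x * (1 - y * x) = x - (x * y) * x := by noncomm_ring
    rw [this, hxy]; simp
  have h4 : (1 - y * x) * (1 - y * x) + y * x = 1 := by
    rw [add_comm]; exact h1
  refine ⟨?_, ?_, ?_, ?_⟩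
  · ext i j
    fin_cases i <;> fin_cases j <;>
      simp [Matrix.mul_apply, Fin.sum_univ_two, hxy, h1, h2, h3]
  · ext i j
    fin_cases i <;> fin_cases j <;>
      simp [Matrix.mul_apply, Fin.sum_univ_two, hxy, h2, h3, h4]
  · intro i j hij
    fin_cases i <;> fin_cases j <;> simp_all
  · intro h
    have := h 1 0 (by decide)
    simp at this
    exact hyx (by rw [sub_eq_zero] at this; exact this.symm)
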